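/- Let X be an infinite dimensional operator space. If for every proper closed nontrivial subspace Y of X the quotient operator space X/Y is minimal, then X is minimal. In particular, ‖[x_ij]‖_{M_n(X)} = sup{‖[x_ij + Y]‖_{M_n(X/Y)} : Y ⊆ X closed, dim(X/Y) < ∞} and this supremum equals ‖[x_ij]‖_{M_n(Min(X))}. -/

import Mathlib

noncomputable section

namespace OSP

/-- A sequence of matrix norms (as bare functions) on a type `X`. -/
abbrev MatNorms (X : Type) : Type := ∀ n : ℕ, Matrix (Fin n) (Fin n) X → ℝ

/-- The operator norm of a scalar matrix, viewed as an operator on Euclidean space. -/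
def scNorm {m : Type} [Fintype m] [DecidableEq m] (A : Matrix m m ℂ) : ℝ :=
  ‖Matrix.toEuclideanCLM (𝕜 := ℂ) (n := m) A‖

/-- The two-sided scalar multiplication `a · x · b` of a matrix over `X` by scalar matrices. -/
def smulMat {X : Type} [AddCommGroup X] [Module ℂ X] {n : ℕ}
    (a : Matrix (Fin n) (Fin n) ℂ) (x : Matrix (Fin n) (Fin n) X)
    (b : Matrix (Fin n) (Fin n) ℂ) : Matrix (Fin n) (Fin n) X :=
  Matrix.of fun i j => ∑ k, ∑ l, (a i k * b l j) • x k l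

/-- An (admissible, abstract) operator space structure on a normed space `X`:
a sequence of matrix norms satisfying Ruan's axioms whose first level is the norm of `X`. -/
structure OSS (X : Type) [NormedAddCommGroup X] [NormedSpace ℂ X] where
  N : MatNorms X
  nonneg : ∀ n x, 0 ≤ N n x
  add_le : ∀ n (x y : Matrix (Fin n) (Fin n) X), N n (x + y) ≤ N n x + N n y
  smul_eq : ∀ n (c : ℂ) (x : Matrix (Fin n) (Fin n) X), N n (c • x) = ‖c‖ * N n x
  eq_zero : ∀ n (x : Matrix (Fin n) (Fin n) X), N n x = 0 → x = 0
  level_one : ∀ x : X, N 1 (Matrix.of fun _ _ => x) = ‖x‖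
  ruan_mul : ∀ n (a b : Matrix (Fin n) (Fin n) ℂ) (x : Matrix (Fin n) (Fin n) X),
    N n (smulMat a x b) ≤ scNorm a * N n x * scNorm b
  ruan_block : ∀ (n m : ℕ) (x : Matrix (Fin n) (Fin n) X) (y : Matrix (Fin m) (Fin m) X),
    N (n + m) ((Matrix.fromBlocks x 0 0 y).submatrix finSumFinEquiv.symm finSumFinEquiv.symm)
      = max (N n x) (N m y)

/-- A bundled operator space. -/
structure OpSpace where
  carrier : Type
  [grp : NormedAddCommGroup carrier]
  [mod : NormedSpace ℂ carrier]
  str : OSS carrier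

attribute [instance] OpSpace.grp OpSpace.mod

/-- `f` amplifies with bound `C` at all matrix levels. -/
def ampBound {X Y : Type} (NX : MatNorms X) (NY : MatNorms Y) (f : X → Y) (C : ℝ) : Prop :=
  ∀ n (x : Matrix (Fin n) (Fin n) X), NY n (x.map f) ≤ C * NX n x

/-- `f` is completely bounded. -/
def CompletelyBounded {X Y : Type} (NX : MatNorms X) (NY : MatNorms Y) (f : X → Y) : Prop :=
  ∃ C, 0 ≤ C ∧ ampBound NX NY f C

/-- The completely bounded norm of `f`. -/
def cbNorm {X Y : Type} (NX : MatNorms X) (NY : MatNorms Y) (f : X → Y) : ℝ :=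
  sInf {C | 0 ≤ C ∧ ampBound NX NY f C}

/-- The matrix norms of the minimal operator space structure `Min X`. -/
def minN (X : Type) [NormedAddCommGroup X] [NormedSpace ℂ X] : MatNorms X :=
  fun n x => sSup {r | ∃ f : X →L[ℂ] ℂ, ‖f‖ ≤ 1 ∧ r = scNorm (x.map ⇑f)}

/-- The matrix norms of the maximal operator space structure `Max X`. -/
def maxN (X : Type) [NormedAddCommGroup X] [NormedSpace ℂ X] : MatNorms X :=
  fun n x => sSup {r | ∃ (Z : OpSpace) (u : X →L[ℂ] Z.carrier), ‖u‖ ≤ 1 ∧ r = Z.str.N n (x.map ⇑u)}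

/-- The inherited (subspace) matrix norms on a submodule. -/
def subN {X : Type} [NormedAddCommGroup X] [NormedSpace ℂ X]
    (NX : MatNorms X) (Y : Submodule ℂ X) : MatNorms Y :=
  fun n x => NX n (x.map ⇑Y.subtype)

/-- The quotient matrix norms on `X ⧸ Y`. -/
def quotN {X : Type} [NormedAddCommGroup X] [NormedSpace ℂ X]
    (NX : MatNorms X) (Y : Submodule ℂ X) : MatNorms (X ⧸ Y) :=
  fun n z => sInf {r | ∃ x : Matrix (Fin n) (Fin n) X, x.map ⇑Y.mkQ = z ∧ r = NX n x}

/-- The canonical operator space matrix norms on `M_d(ℂ)`. -/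
def MnN (d : ℕ) : MatNorms (Matrix (Fin d) (Fin d) ℂ) :=
  fun n x => scNorm (Matrix.of fun p q : Fin n × Fin d => x p.1 q.1 p.2 q.2)

/-- The dual matrix norms on `X* = X →L[ℂ] ℂ`, via `M_n(X*) = CB(X, M_n)`. -/
def dualN {X : Type} [NormedAddCommGroup X] [NormedSpace ℂ X] (NX : MatNorms X) :
    MatNorms (X →L[ℂ] ℂ) :=
  fun n F => cbNorm NX (MnN n) (fun x => Matrix.of fun i j => F i j x)

/-- The annihilator `Y⊥` of a subspace `Y ⊆ X` inside the dual `X*`. -/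
def ann {X : Type} [NormedAddCommGroup X] [NormedSpace ℂ X] (Y : Submodule ℂ X) :
    Submodule ℂ (X →L[ℂ] ℂ) where
  carrier := {f | ∀ y ∈ Y, f y = 0}
  add_mem' := by intro f g hf hg y hy; simp [hf y hy, hg y hy]
  zero_mem' := by intro y hy; simp
  smul_mem' := by intro c f hf y hy; simp [hf y hy]

/-- A complete quotient map: every amplification maps the open unit ball onto the open unit ball. -/
def CompleteQuotientMap {X Z : Type} (NX : MatNorms X) (NZ : MatNorms Z) (f : X → Z) : Prop :=
  ∀ n, (fun x : Matrix (Fin n) (Fin n) X => x.map f) '' {x | NX n x < 1} = {z | NZ n z < 1}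

end OSP

namespace OSP

variable {X : Type} [NormedAddCommGroup X] [NormedSpace ℂ X]

/-- The quotient map `X → X ⧸ Y` as a continuous linear map. -/
def mkQCLM (Y : Submodule ℂ X) [IsClosed (Y : Set X)] : X →L[ℂ] X ⧸ Y :=
  Y.mkQ.mkContinuous 1 fun x => by
    simpa using Submodule.Quotient.norm_mk_le Y x

/-- Precomposition with the quotient map: the canonical embedding `(X/Y)* → X*`,
whose range is the annihilator `Y⊥`. -/
def pullQ (Y : Submodule ℂ X) [IsClosed (Y : Set X)] :
    ((X ⧸ Y) →L[ℂ] ℂ) →ₗ[ℂ] (X →L[ℂ] ℂ) where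
  toFun f := f.comp (mkQCLM Y)
  map_add' := by intro f g; ext x; simp
  map_smul' := by intro c f; ext x; simp

/-- The restriction map `X* → Y*`. -/
def resMap (Y : Submodule ℂ X) : (X →L[ℂ] ℂ) →ₗ[ℂ] (Y →L[ℂ] ℂ) where
  toFun f := f.comp Y.subtypeL
  map_add' := by intro f g; ext x; simp
  map_smul' := by intro c f; ext x; simp

theorem ann_le_ker_resMap (Y : Submodule ℂ X) : ann Y ≤ LinearMap.ker (resMap Y) := by
  intro f hf
  simp only [LinearMap.mem_ker]
  ext y
  exact hf y y.2

/-- The canonical map `X*/Y⊥ → Y*` induced by restriction. -/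
def resQbar (Y : Submodule ℂ X) : ((X →L[ℂ] ℂ) ⧸ ann Y) →ₗ[ℂ] (Y →L[ℂ] ℂ) :=
  (ann Y).liftQ (resMap Y) (ann_le_ker_resMap Y)

end OSP
namespace OSP

section ScNormAux

lemma euclid_apply_le {m : Type} [Fintype m] (u : EuclideanSpace ℂ m) (j : m) :
    ‖u j‖ ≤ ‖u‖ := by
  rw [EuclideanSpace.norm_eq]
  calc ‖u j‖ = Real.sqrt (‖u j‖ ^ 2) := (Real.sqrt_sq (norm_nonneg _)).symm
    _ ≤ _ := Real.sqrt_le_sqrt (Finset.single_le_sum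
        (f := fun i => ‖u i‖ ^ 2) (fun i _ => sq_nonneg _) (Finset.mem_univ j))

lemma toEuclideanCLM_apply' {m : Type} [Fintype m] [DecidableEq m] (A : Matrix m m ℂ)
    (u : EuclideanSpace ℂ m) :
    (Matrix.toEuclideanCLM (𝕜 := ℂ) A) u
      = (WithLp.equiv 2 (m → ℂ)).symm (A.mulVec (WithLp.equiv 2 (m → ℂ) u)) := by
  have := Matrix.toEuclideanCLM_toLp (𝕜 := ℂ) A (WithLp.equiv 2 (m → ℂ) u)
  simpa [WithLp.equiv_symm_apply] using this

lemma scNorm_zero {m : Type} [Fintype m] [DecidableEq m] :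
    scNorm (0 : Matrix m m ℂ) = 0 := by
  unfold scNorm
  rw [map_zero, norm_zero]

lemma scNorm_stdBasisMatrix_le {m : Type} [Fintype m] [DecidableEq m] (i j : m) (c : ℂ) :
    scNorm (Matrix.single i j c) ≤ ‖c‖ := by
  refine ContinuousLinearMap.opNorm_le_bound _ (norm_nonneg c) fun u => ?_
  rw [toEuclideanCLM_apply', Matrix.single_mulVec]
  have h1 : Function.update (0 : m → ℂ) i (c * (WithLp.equiv 2 (m → ℂ)) u j)
      = Pi.single i (c * u j) := rfl
  rw [h1]
  have h2 : ((WithLp.equiv 2 (m → ℂ)).symm (Pi.single i (c * u j)))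
      = EuclideanSpace.single i (c * u j) := rfl
  rw [h2, EuclideanSpace.norm_single, norm_mul]
  exact mul_le_mul_of_nonneg_left (euclid_apply_le u j) (norm_nonneg c)

lemma scNorm_le_sum {m : Type} [Fintype m] [DecidableEq m] (A : Matrix m m ℂ) :
    scNorm A ≤ ∑ i, ∑ j, ‖A i j‖ := by
  conv_lhs => rw [scNorm, Matrix.matrix_eq_sum_single A]
  rw [map_sum]
  refine (norm_sum_le _ _).trans (Finset.sum_le_sum fun i _ => ?_)
  rw [map_sum]
  exact (norm_sum_le _ _).trans (Finset.sum_le_sum fun j _ => scNorm_stdBasisMatrix_le i j _)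

end ScNormAux

section OSSAux

variable {X : Type} [NormedAddCommGroup X] [NormedSpace ℂ X]

lemma OSS.N_zero (os : OSS X) (n : ℕ) : os.N n 0 = 0 := by
  have h := os.smul_eq n 0 0
  rw [smul_zero] at h
  simpa using h

lemma OSS.N_neg (os : OSS X) (n : ℕ) (x : Matrix (Fin n) (Fin n) X) :
    os.N n (-x) = os.N n x := by
  have h := os.smul_eq n (-1) x
  rw [neg_one_smul] at h
  simpa using h

/-- Type synonym carrying the level-`n` matrix norm of an operator space structure. -/
def OSS.Mat (os : OSS X) (n : ℕ) : Type := Matrix (Fin n) (Fin n) X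

instance (os : OSS X) (n : ℕ) : AddCommGroup (os.Mat n) :=
  inferInstanceAs (AddCommGroup (Matrix (Fin n) (Fin n) X))

instance (os : OSS X) (n : ℕ) : Module ℂ (os.Mat n) :=
  inferInstanceAs (Module ℂ (Matrix (Fin n) (Fin n) X))

instance (os : OSS X) (n : ℕ) : NormedAddCommGroup (os.Mat n) :=
  AddGroupNorm.toNormedAddCommGroup
    { toFun := os.N n
      map_zero' := os.N_zero n
      add_le' := os.add_le n
      neg' := os.N_neg n
      eq_zero_of_map_eq_zero' := os.eq_zero n }

instance (os : OSS X) (n : ℕ) : NormedSpace ℂ (os.Mat n) :=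
  ⟨fun c x => le_of_eq (os.smul_eq n c x)⟩

lemma OSS.Mat_norm (os : OSS X) (n : ℕ) (x : os.Mat n) :
    ‖x‖ = os.N n (x : Matrix (Fin n) (Fin n) X) := rfl

/-- The zero index in `Fin (1 + m)`. -/
def fz (m : ℕ) : Fin (1 + m) := ⟨0, Nat.lt_of_lt_of_le Nat.one_pos (Nat.le_add_right 1 m)⟩

lemma OSS.N_stdBasis_zero (os : OSS X) (m : ℕ) (v : X) :
    os.N (1 + m) (Matrix.single (fz m) (fz m) v) = ‖v‖ := by
  have hb := os.ruan_block 1 m (Matrix.of fun _ _ => v) 0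
  rw [os.N_zero m, os.level_one v] at hb
  have hM : ((Matrix.fromBlocks (Matrix.of fun _ _ => v) 0 0 (0 : Matrix (Fin m) (Fin m) X)).submatrix
      finSumFinEquiv.symm finSumFinEquiv.symm)
      = Matrix.single (fz m) (fz m) v := by
    ext p q
    have hfz : ∀ r : Fin (1 + m), (fz m = r) ↔ ((r : ℕ) = 0) := by
      intro r; rw [Fin.ext_iff]; exact eq_comm
    have hval : ∀ r : Fin (1 + m), (r : ℕ) = 0 ∨ (1 ≤ (r : ℕ)) := fun r => by omega
    have key : ∀ r : Fin (1 + m), ((r : ℕ) = 0 → finSumFinEquiv.symm r = Sum.inl 0) ∧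
        (1 ≤ (r : ℕ) → ∃ b : Fin m, finSumFinEquiv.symm r = Sum.inr b) := by
      intro r
      constructor
      · intro hr
        have : r = finSumFinEquiv (Sum.inl (0 : Fin 1)) := by
          rw [finSumFinEquiv_apply_left, Fin.ext_iff, hr]; rfl
        rw [this, Equiv.symm_apply_apply]
      · intro hr
        rcases hs : finSumFinEquiv.symm r with a | b
        · exfalso
          have : r = finSumFinEquiv (Sum.inl a) := by
            rw [← hs, Equiv.apply_symm_apply]
          rw [finSumFinEquiv_apply_left, Fin.ext_iff] at this
          have ha : (a : ℕ) < 1 := a.isLt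
          simp only [Fin.coe_castAdd] at this
          omega
        · exact ⟨b, rfl⟩
    rcases hval p with hp | hp <;> rcases hval q with hq | hq
    · rw [Matrix.submatrix_apply, (key p).1 hp, (key q).1 hq]
      rw [Matrix.fromBlocks_apply₁₁, Matrix.of_apply]
      rw [Matrix.single, Matrix.of_apply, if_pos ⟨(hfz p).2 hp, (hfz q).2 hq⟩]
    · obtain ⟨b, hbq⟩ := (key q).2 hq
      rw [Matrix.submatrix_apply, (key p).1 hp, hbq, Matrix.fromBlocks_apply₁₂]
      rw [Matrix.single, Matrix.of_apply, if_neg (by rw [hfz q]; omega)]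
      rfl
    · obtain ⟨b, hbp⟩ := (key p).2 hp
      rw [Matrix.submatrix_apply, hbp, (key q).1 hq, Matrix.fromBlocks_apply₂₁]
      rw [Matrix.single, Matrix.of_apply, if_neg (by rw [hfz p]; omega)]
      rfl
    · obtain ⟨b, hbp⟩ := (key p).2 hp
      obtain ⟨b', hbq⟩ := (key q).2 hq
      rw [Matrix.submatrix_apply, hbp, hbq, Matrix.fromBlocks_apply₂₂]
      rw [Matrix.single, Matrix.of_apply, if_neg (by rw [hfz p]; omega)]
      rfl
  rw [hM] at hb
  rw [hb]
  exact max_eq_left (norm_nonneg v)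

end OSSAux

end OSP
namespace OSP

lemma scNorm_nonneg {m : Type} [Fintype m] [DecidableEq m] (A : Matrix m m ℂ) :
    0 ≤ scNorm A := norm_nonneg _

variable {X : Type} [NormedAddCommGroup X] [NormedSpace ℂ X]

lemma OSS.N_stdBasis_le (os : OSS X) (m : ℕ) (i j : Fin (1 + m)) (v : X) :
    os.N (1 + m) (Matrix.single i j v) ≤ ‖v‖ := by
  have key : Matrix.single i j v =
      smulMat (Matrix.single i (fz m) (1 : ℂ)) (Matrix.single (fz m) (fz m) v)
        (Matrix.single (fz m) j (1 : ℂ)) := by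
    ext p q
    rw [smulMat, Matrix.of_apply]
    have hterm : ∀ k l : Fin (1 + m),
        ((Matrix.single i (fz m) (1 : ℂ)) p k * (Matrix.single (fz m) j (1 : ℂ)) l q)
          • (Matrix.single (fz m) (fz m) v) k l
        = if fz m = l then (if fz m = k then
            (if i = p ∧ j = q then v else 0) else 0) else 0 := by
      intro k l
      by_cases hk : fz m = k
      · by_cases hl : fz m = l
        · subst hk; subst hl
          simp only [Matrix.single, Matrix.of_apply]
          by_cases hip : i = p <;> by_cases hjq : j = q <;>
            simp [hip, hjq]
        · simp [Matrix.single, hl]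
      · simp [Matrix.single, hk]
    simp only [hterm]
    simp only [Finset.sum_ite_eq, Finset.mem_univ, if_true]
    simp [Matrix.single]
  rw [key]
  have h2 := os.ruan_mul (1 + m) (Matrix.single i (fz m) (1 : ℂ))
      (Matrix.single (fz m) j (1 : ℂ)) (Matrix.single (fz m) (fz m) v)
  refine h2.trans ?_
  rw [os.N_stdBasis_zero m v]
  have ha := scNorm_stdBasisMatrix_le i (fz m) (1 : ℂ)
  have hb := scNorm_stdBasisMatrix_le (fz m) j (1 : ℂ)
  rw [norm_one] at ha hb
  calc scNorm (Matrix.single i (fz m) (1 : ℂ)) * ‖v‖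
        * scNorm (Matrix.single (fz m) j (1 : ℂ))
      ≤ 1 * ‖v‖ * 1 := by
        apply mul_le_mul _ hb (scNorm_nonneg _) (by positivity)
        exact mul_le_mul_of_nonneg_right ha (norm_nonneg v)
    _ = ‖v‖ := by ring

lemma quotN_le_N (os : OSS X) (Y : Submodule ℂ X) {n : ℕ} (x : Matrix (Fin n) (Fin n) X) :
    quotN os.N Y n (x.map ⇑Y.mkQ) ≤ os.N n x := by
  apply csInf_le
  · refine ⟨0, ?_⟩
    rintro r ⟨x', -, rfl⟩
    exact os.nonneg n x'
  · exact ⟨x, rfl, rfl⟩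

lemma minN_bddAbove (Z : Type) [NormedAddCommGroup Z] [NormedSpace ℂ Z] (n : ℕ)
    (z : Matrix (Fin n) (Fin n) Z) :
    BddAbove {r | ∃ f : Z →L[ℂ] ℂ, ‖f‖ ≤ 1 ∧ r = scNorm (z.map ⇑f)} := by
  refine ⟨∑ i, ∑ j, ‖z i j‖, ?_⟩
  rintro r ⟨f, hf, rfl⟩
  refine (scNorm_le_sum _).trans
    (Finset.sum_le_sum fun i _ => Finset.sum_le_sum fun j _ => ?_)
  calc ‖(z.map ⇑f) i j‖ = ‖f (z i j)‖ := rfl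
    _ ≤ ‖f‖ * ‖z i j‖ := f.le_opNorm _
    _ ≤ 1 * ‖z i j‖ := mul_le_mul_of_nonneg_right hf (norm_nonneg _)
    _ = ‖z i j‖ := one_mul _

lemma minN_zero_mem (Z : Type) [NormedAddCommGroup Z] [NormedSpace ℂ Z] (n : ℕ)
    (z : Matrix (Fin n) (Fin n) Z) :
    (0 : ℝ) ∈ {r | ∃ f : Z →L[ℂ] ℂ, ‖f‖ ≤ 1 ∧ r = scNorm (z.map ⇑f)} := by
  refine ⟨0, by simp, ?_⟩
  have hz : z.map ⇑(0 : Z →L[ℂ] ℂ) = 0 := by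
    ext i j; simp [Matrix.map_apply]
  rw [hz, scNorm_zero]

lemma minN_quot_le_minN (Y : Submodule ℂ X) [IsClosed (Y : Set X)] {n : ℕ}
    (x : Matrix (Fin n) (Fin n) X) :
    minN (X ⧸ Y) n (x.map ⇑Y.mkQ) ≤ minN X n x := by
  refine csSup_le_csSup (minN_bddAbove X n x) ⟨0, minN_zero_mem _ _ _⟩ ?_
  rintro r ⟨g, hg, rfl⟩
  refine ⟨g.comp (mkQCLM Y), ?_, ?_⟩
  · refine (g.opNorm_comp_le _).trans ?_
    have h2 : ‖mkQCLM Y‖ ≤ 1 := LinearMap.mkContinuous_norm_le _ zero_le_one _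
    calc ‖g‖ * ‖mkQCLM Y‖ ≤ 1 * 1 := mul_le_mul hg h2 (ContinuousLinearMap.opNorm_nonneg _) zero_le_one
      _ = 1 := one_mul 1
  · rw [Matrix.map_map]
    rfl

lemma exists_quot_clm (Y : Submodule ℂ X) [IsClosed (Y : Set X)] (f : X →L[ℂ] ℂ)
    (hY : Y ≤ LinearMap.ker (f : X →ₗ[ℂ] ℂ)) (hf : ‖f‖ ≤ 1) :
    ∃ g : (X ⧸ Y) →L[ℂ] ℂ, ‖g‖ ≤ 1 ∧ ∀ v, g (Y.mkQ v) = f v := by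
  have hle : Y ≤ LinearMap.ker (f : X →ₗ[ℂ] ℂ) := hY
  set glin := Y.liftQ (f : X →ₗ[ℂ] ℂ) hle with hglin
  have hb : ∀ z : X ⧸ Y, ‖glin z‖ ≤ 1 * ‖z‖ := by
    intro z
    rw [one_mul]
    refine _root_.le_of_forall_pos_le_add fun ε hε => ?_
    obtain ⟨v, hv, hvn⟩ := Submodule.Quotient.norm_mk_lt z hε
    have hz : glin z = f v := by rw [← hv]; rfl
    rw [hz]
    calc ‖f v‖ ≤ ‖f‖ * ‖v‖ := f.le_opNorm v
      _ ≤ 1 * ‖v‖ := mul_le_mul_of_nonneg_right hf (norm_nonneg _)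
      _ = ‖v‖ := one_mul _
      _ ≤ ‖z‖ + ε := le_of_lt hvn
  refine ⟨glin.mkContinuous 1 hb, LinearMap.mkContinuous_norm_le _ zero_le_one _, fun v => ?_⟩
  show glin (Y.mkQ v) = f v
  rw [Submodule.mkQ_apply]
  exact Submodule.liftQ_apply _ _ _

end OSP

/-- if `X` is an infinite dimensional operator space such that the quotient
of `X` by every proper closed nontrivial subspace is minimal, then `X` is minimal; in
particular the matrix norms of `X` are the suprema of the quotient norms over closed
subspaces of finite codimension, and this supremum is the `Min(X)` norm. -/
theorem stmt19 (X : Type) [NormedAddCommGroup X] [NormedSpace ℂ X] [CompleteSpace X]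
    (os : OSP.OSS X) (hinf : ¬ FiniteDimensional ℂ X)
    (h : ∀ (Y : Submodule ℂ X) [IsClosed (Y : Set X)], Y ≠ ⊥ → Y ≠ ⊤ →
      ∀ (n : ℕ) (z : Matrix (Fin n) (Fin n) (X ⧸ Y)),
        OSP.quotN os.N Y n z = OSP.minN (X ⧸ Y) n z) :
    ∀ (n : ℕ) (x : Matrix (Fin n) (Fin n) X),
      os.N n x = OSP.minN X n x ∧
        os.N n x = sSup {r | ∃ Y : Submodule ℂ X, IsClosed (Y : Set X) ∧
          FiniteDimensional ℂ (X ⧸ Y) ∧ r = OSP.quotN os.N Y n (x.map ⇑Y.mkQ)} := by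
  intro n x
  by_cases hx0 : x = 0
  · subst hx0
    have hN0 : os.N n 0 = 0 := os.N_zero n
    have hq0 : ∀ Y : Submodule ℂ X,
        OSP.quotN os.N Y n ((0 : Matrix (Fin n) (Fin n) X).map ⇑Y.mkQ) = 0 := by
      intro Y
      refine le_antisymm (hN0 ▸ OSP.quotN_le_N os Y 0) ?_
      refine le_csInf ⟨os.N n 0, 0, rfl, rfl⟩ ?_
      rintro r ⟨x', -, rfl⟩
      exact os.nonneg n x'
    constructor
    · rw [hN0]
      have hle : OSP.minN X n 0 ≤ 0 := by
        apply Real.sSup_le _ le_rfl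
        rintro r ⟨f, hf, rfl⟩
        have hz : (0 : Matrix (Fin n) (Fin n) X).map ⇑f = 0 := by
          ext i j; simp [Matrix.map_apply]
        rw [hz, OSP.scNorm_zero]
      have hge : (0 : ℝ) ≤ OSP.minN X n 0 :=
        le_csSup (OSP.minN_bddAbove X n 0) (OSP.minN_zero_mem X n 0)
      linarith
    · rw [hN0]
      symm
      apply IsGreatest.csSup_eq
      constructor
      · refine ⟨⊤, ?_, ?_, (hq0 ⊤).symm⟩
        · rw [Submodule.top_coe]; exact isClosed_univ
        · haveI : Subsingleton (X ⧸ (⊤ : Submodule ℂ X)) :=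
            Submodule.Quotient.subsingleton_iff.mpr rfl
          exact Module.Finite.of_surjective (0 : (Fin 0 → ℂ) →ₗ[ℂ] (X ⧸ (⊤ : Submodule ℂ X)))
            (fun y => ⟨0, Subsingleton.elim _ _⟩)
      · rintro r ⟨Y, -, -, rfl⟩
        exact (hq0 Y).le
  · have hn : n ≠ 0 := by
      intro hn0
      subst hn0
      exact hx0 (by ext i j; exact i.elim0)
    obtain ⟨m, rfl⟩ : ∃ m, n = 1 + m := ⟨n - 1, by omega⟩
    set xs : os.Mat (1 + m) := x with hxsdef
    obtain ⟨F, hF1, hFx⟩ := exists_dual_vector ℂ xs (norm_ne_zero_iff.mpr hx0)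
    -- reinterpret F as a linear functional on genuine matrices
    let Flin : Matrix (Fin (1 + m)) (Fin (1 + m)) X →ₗ[ℂ] ℂ :=
      { toFun := fun w => F w
        map_add' := fun a b => F.map_add a b
        map_smul' := fun c a => F.map_smul c a }
    have hFlin_le : ∀ w : Matrix (Fin (1 + m)) (Fin (1 + m)) X,
        ‖Flin w‖ ≤ os.N (1 + m) w := by
      intro w
      have hle := F.le_opNorm (show os.Mat (1 + m) from w)
      rw [hF1, one_mul] at hle
      exact hle
    have hFxval : Flin x = ((os.N (1 + m) x : ℝ) : ℂ) := hFx
    -- the entry functionals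
    let sb : Fin (1 + m) → Fin (1 + m) → (X →ₗ[ℂ] Matrix (Fin (1 + m)) (Fin (1 + m)) X) :=
      fun i j =>
      { toFun := fun v => Matrix.single i j v
        map_add' := fun v w => Matrix.single_add i j v w
        map_smul' := fun c v => (Matrix.smul_single c i j v).symm }
    let lm : Fin (1 + m) → Fin (1 + m) → (X →ₗ[ℂ] ℂ) := fun i j => Flin.comp (sb i j)
    have lmb : ∀ (i j : Fin (1 + m)) (v : X), ‖lm i j v‖ ≤ 1 * ‖v‖ := by
      intro i j v
      rw [one_mul]
      calc ‖lm i j v‖ = ‖Flin (Matrix.single i j v)‖ := rfl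
        _ ≤ os.N (1 + m) (Matrix.single i j v) := hFlin_le _
        _ ≤ ‖v‖ := os.N_stdBasis_le m i j v
    let fc : Fin (1 + m) → Fin (1 + m) → (X →L[ℂ] ℂ) :=
      fun i j => (lm i j).mkContinuous 1 (lmb i j)
    let Φ : X →L[ℂ] (Fin (1 + m) × Fin (1 + m) → ℂ) :=
      ContinuousLinearMap.pi fun p => fc p.1 p.2
    set Y : Submodule ℂ X := LinearMap.ker (Φ : X →ₗ[ℂ] (Fin (1 + m) × Fin (1 + m) → ℂ)) with hYdef
    have hYc : IsClosed (Y : Set X) := ContinuousLinearMap.isClosed_ker Φ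
    haveI := hYc
    have hmemY : ∀ v : X, v ∈ Y ↔ ∀ i j : Fin (1 + m), Flin (Matrix.single i j v) = 0 := by
      intro v
      rw [hYdef, LinearMap.mem_ker]
      constructor
      · intro hv i j
        exact congrFun hv (i, j)
      · intro hv
        funext p
        exact hv p.1 p.2
    have hFdecomp : ∀ w : Matrix (Fin (1 + m)) (Fin (1 + m)) X,
        Flin w = ∑ i, ∑ j, Flin (Matrix.single i j (w i j)) := by
      intro w
      conv_lhs => rw [Matrix.matrix_eq_sum_single w]
      rw [map_sum]
      congr 1
      funext i
      rw [map_sum]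
    have hFY : ∀ w : Matrix (Fin (1 + m)) (Fin (1 + m)) X,
        (∀ i j, w i j ∈ Y) → Flin w = 0 := by
      intro w hw
      rw [hFdecomp w]
      refine Finset.sum_eq_zero fun i _ => Finset.sum_eq_zero fun j _ => ?_
      exact (hmemY (w i j)).1 (hw i j) i j
    have hquot_ge : os.N (1 + m) x ≤ OSP.quotN os.N Y (1 + m) (x.map ⇑Y.mkQ) := by
      refine le_csInf ⟨os.N (1 + m) x, x, rfl, rfl⟩ ?_
      rintro r ⟨x', hx', rfl⟩
      have hdiff : ∀ i j, (x' - x) i j ∈ Y := by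
        intro i j
        have hij : Y.mkQ (x' i j) = Y.mkQ (x i j) := congrFun (congrFun hx' i) j
        have hzero : Y.mkQ ((x' - x) i j) = 0 := by
          have : (x' - x) i j = x' i j - x i j := rfl
          rw [this, map_sub, hij, sub_self]
        rwa [Submodule.mkQ_apply, Submodule.Quotient.mk_eq_zero] at hzero
      have hFx' : Flin x' = Flin x := by
        have h1 : Flin (x' - x) = 0 := hFY (x' - x) hdiff
        have h2 : Flin (x' - x) = Flin x' - Flin x := map_sub Flin x' x
        rw [h2] at h1
        exact sub_eq_zero.mp h1
      calc os.N (1 + m) x = ‖((os.N (1 + m) x : ℝ) : ℂ)‖ := by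
            rw [Complex.norm_real, Real.norm_eq_abs, abs_of_nonneg (os.nonneg _ _)]
        _ = ‖Flin x'‖ := by rw [hFx', hFxval]
        _ ≤ os.N (1 + m) x' := hFlin_le x'
    have hYtop : Y ≠ ⊤ := by
      intro htop
      have hx_zero : Flin x = 0 := hFY x (fun i j => htop ▸ Submodule.mem_top)
      rw [hFxval] at hx_zero
      have hNz : os.N (1 + m) x = 0 := by exact_mod_cast hx_zero
      exact hx0 (os.eq_zero _ _ hNz)
    have hfinQ : FiniteDimensional ℂ (X ⧸ Y) := by
      have hker : Y = LinearMap.ker (Φ : X →ₗ[ℂ] (Fin (1 + m) × Fin (1 + m) → ℂ)) := rfl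
      rw [hker]
      exact (LinearMap.quotKerEquivRange
        (Φ : X →ₗ[ℂ] (Fin (1 + m) × Fin (1 + m) → ℂ))).symm.finiteDimensional
    have hYbot : Y ≠ ⊥ := by
      intro hbot
      apply hinf
      rw [hbot] at hfinQ
      exact (Submodule.quotEquivOfEqBot (⊥ : Submodule ℂ X) rfl).finiteDimensional
    have hYquot := h Y hYbot hYtop (1 + m) (x.map ⇑Y.mkQ)
    have hmain_ge : os.N (1 + m) x ≤ OSP.minN X (1 + m) x :=
      calc os.N (1 + m) x ≤ OSP.quotN os.N Y (1 + m) (x.map ⇑Y.mkQ) := hquot_ge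
        _ = OSP.minN (X ⧸ Y) (1 + m) (x.map ⇑Y.mkQ) := hYquot
        _ ≤ OSP.minN X (1 + m) x := OSP.minN_quot_le_minN Y x
    have hmain_le : OSP.minN X (1 + m) x ≤ os.N (1 + m) x := by
      apply Real.sSup_le _ (os.nonneg _ _)
      rintro r ⟨f, hf, rfl⟩
      by_cases hf0 : f = 0
      · subst hf0
        have hz : x.map ⇑(0 : X →L[ℂ] ℂ) = 0 := by ext i j; simp [Matrix.map_apply]
        rw [hz, OSP.scNorm_zero]
        exact os.nonneg _ _
      · set Z : Submodule ℂ X := LinearMap.ker (f : X →ₗ[ℂ] ℂ) with hZdef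
        have hZc : IsClosed (Z : Set X) := ContinuousLinearMap.isClosed_ker f
        haveI := hZc
        have hZtop : Z ≠ ⊤ := by
          intro htop
          apply hf0
          ext v
          have hv : v ∈ Z := htop ▸ Submodule.mem_top
          simpa [hZdef] using hv
        have hZbot : Z ≠ ⊥ := by
          intro hbot
          apply hinf
          have hker : LinearMap.ker (f : X →ₗ[ℂ] ℂ) = ⊥ := hbot
          exact FiniteDimensional.of_injective (f : X →ₗ[ℂ] ℂ) (LinearMap.ker_eq_bot.mp hker)
        obtain ⟨g, hg1, hgv⟩ := OSP.exists_quot_clm Z f le_rfl hf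
        have hmapeq : x.map ⇑f = (x.map ⇑Z.mkQ).map ⇑g := by
          rw [Matrix.map_map]
          ext i j
          exact (hgv (x i j)).symm
        rw [hmapeq]
        have hZquot := h Z hZbot hZtop (1 + m) (x.map ⇑Z.mkQ)
        calc OSP.scNorm ((x.map ⇑Z.mkQ).map ⇑g)
            ≤ OSP.minN (X ⧸ Z) (1 + m) (x.map ⇑Z.mkQ) :=
              le_csSup (OSP.minN_bddAbove _ _ _) ⟨g, hg1, rfl⟩
          _ = OSP.quotN os.N Z (1 + m) (x.map ⇑Z.mkQ) := hZquot.symm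
          _ ≤ os.N (1 + m) x := OSP.quotN_le_N os Z x
    refine ⟨le_antisymm hmain_ge hmain_le, ?_⟩
    have hquot_eq : OSP.quotN os.N Y (1 + m) (x.map ⇑Y.mkQ) = os.N (1 + m) x :=
      le_antisymm (OSP.quotN_le_N os Y x) hquot_ge
    symm
    apply IsGreatest.csSup_eq
    constructor
    · exact ⟨Y, hYc, hfinQ, hquot_eq.symm⟩
    · rintro r ⟨Y', -, -, rfl⟩
      exact OSP.quotN_le_N os Y' x
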